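/- Let c, k, t, t0, y be integers and q a prime power with y ≠ 0, c ≤ k − t, and t0 ≤ t. Then [[k, t0; c]]_q · [t0 choose y]_q ≤ [[k, t; c]]_q · [t choose y]_q. -/

import Mathlib

open Module

/-- The subspace of `F_q^v` of vectors whose first `k` coordinates vanish
(denoted `Γ` in the paper); its complement (as a set of vectors) is `Δ`. -/
def Gamma (K : Type) [Field K] (k v : ℕ) : Submodule K (Fin v → K) where
  carrier := {x | ∀ j : Fin v, (j : ℕ) < k → x j = 0}
  add_mem' := by
    intro a b ha hb j hj
    simp [ha j hj, hb j hj]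
  zero_mem' := by
    intro j hj
    rfl
  smul_mem' := by
    intro c x hx j hj
    simp [hx j hj]

/-- The subspace distance `d_S(U,W) = dim(U+W) - dim(U ∩ W)`. -/
noncomputable def sDist {K : Type} [Field K] {v : ℕ}
    (U W : Submodule K (Fin v → K)) : ℕ :=
  finrank K ↥(U ⊔ W) - finrank K ↥(U ⊓ W)

/-- A constant dimension code of dimension `k` and minimum subspace distance `d`. -/
def IsCDC (K : Type) [Field K] (v : ℕ) (d k : ℤ)
    (C : Set (Submodule K (Fin v → K))) : Prop :=
  (∀ U ∈ C, (finrank K U : ℤ) = k) ∧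
  ∀ U ∈ C, ∀ W ∈ C, U ≠ W → d ≤ (sDist U W : ℤ)

/-- `A_q(v,d;k)`: the maximum cardinality of a `(v,M,d;k)_q` CDC. -/
noncomputable def Amax (K : Type) [Field K] (v : ℕ) (d k : ℤ) : ℕ :=
  sSup {n | ∃ C : Set (Submodule K (Fin v → K)), IsCDC K v d k C ∧ C.ncard = n}

/-- Row `i` of the `k × v` matrix `(I_k | A)`. -/
def liftRow {K : Type} [Field K] {k v : ℕ} (A : Matrix (Fin k) (Fin (v - k)) K)
    (i : Fin k) : Fin v → K := fun j =>
  if (j : ℕ) < k then (if (i : ℕ) = (j : ℕ) then 1 else 0)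
  else if h2 : (j : ℕ) - k < v - k then A i ⟨(j : ℕ) - k, h2⟩ else 0

/-- `M` is a `(v,d;k)_q` lifted MRD code: `M = { rowspan (I_k | A) : A ∈ R }`
for a `[k × (v-k), q^((v-k)(k-d/2+1)), d/2]_q` rank metric code `R`. -/
def IsLMRD (q : ℕ) (K : Type) [Field K] (v d k : ℕ)
    (M : Set (Submodule K (Fin v → K))) : Prop :=
  ∃ R : Set (Matrix (Fin k) (Fin (v - k)) K),
    R.ncard = q ^ ((v - k) * (k - d / 2 + 1)) ∧
    (∀ A ∈ R, ∀ B ∈ R, A ≠ B → d / 2 ≤ (A - B).rank) ∧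
    M = {U | ∃ A ∈ R, U = Submodule.span K (Set.range (liftRow A))}

/-- The Gaussian binomial coefficient `[a choose b]_q`, defined to be `0`
unless `0 ≤ b ≤ a`. -/
noncomputable def qBin (q : ℕ) (a b : ℤ) : ℚ :=
  if 0 ≤ b ∧ b ≤ a then
    ∏ i ∈ Finset.range b.toNat,
      ((q : ℚ) ^ a - (q : ℚ) ^ (i : ℤ)) / ((q : ℚ) ^ b - (q : ℚ) ^ (i : ℤ))
  else 0

/-- `[[w, u; c]]_q = q^(u*c) * [w-u choose c]_q` for `0 ≤ c ≤ w-u`, else `0`. -/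
noncomputable def qBinD (q : ℕ) (w u c : ℤ) : ℚ :=
  if 0 ≤ c ∧ c ≤ w - u then (q : ℚ) ^ (u * c) * qBin q (w - u) c else 0

/-- `[[k,t0;c]]_q [t0 choose y]_q ≤ [[k,t;c]]_q [t choose y]_q`
for integers with `y ≠ 0`, `c ≤ k - t` and `t0 ≤ t`. -/
lemma qfac_nonneg {q : ℕ} (hq : 2 ≤ q) {a b : ℤ} (hba : b ≤ a) {i : ℕ}
    (hib : (i : ℤ) < b) : 0 ≤ ((q : ℚ) ^ a - (q : ℚ) ^ (i : ℤ)) / ((q : ℚ) ^ b - (q : ℚ) ^ (i : ℤ)) := by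
  have hq1 : (1 : ℚ) < (q : ℚ) := by exact_mod_cast hq
  have h1 : (q:ℚ) ^ (i:ℤ) < (q:ℚ) ^ b := zpow_lt_zpow_right₀ hq1 hib
  have h2 : (q:ℚ) ^ b ≤ (q:ℚ) ^ a := zpow_le_zpow_right₀ hq1.le hba
  exact div_nonneg (by linarith) (by linarith)

lemma qBin_nonneg {q : ℕ} (hq : 2 ≤ q) (a b : ℤ) : 0 ≤ qBin q a b := by
  unfold qBin
  split
  · next h =>
    refine Finset.prod_nonneg fun i hi => qfac_nonneg hq h.2 ?_
    have := Finset.mem_range.mp hi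
    omega
  · exact le_refl 0

lemma qBinD_nonneg {q : ℕ} (hq : 2 ≤ q) (w u c : ℤ) : 0 ≤ qBinD q w u c := by
  unfold qBinD
  split
  · have hq0 : (0:ℚ) < q := by positivity
    exact mul_nonneg (zpow_pos hq0 _).le (qBin_nonneg hq _ _)
  · exact le_refl 0

lemma qBin_cast (q A B : ℕ) (h : B ≤ A) :
    qBin q (A:ℤ) (B:ℤ) =
      (∏ i ∈ Finset.range B, ((q:ℚ)^A - (q:ℚ)^i)) /
      (∏ i ∈ Finset.range B, ((q:ℚ)^B - (q:ℚ)^i)) := by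
  rw [qBin, if_pos ⟨Int.natCast_nonneg B, by exact_mod_cast h⟩, ← Finset.prod_div_distrib]
  rw [Int.toNat_natCast]
  refine Finset.prod_congr rfl fun i _ => ?_
  norm_cast

lemma prod_den_pos {q : ℕ} (hq : 2 ≤ q) (B : ℕ) :
    0 < ∏ i ∈ Finset.range B, ((q:ℚ)^B - (q:ℚ)^i) := by
  have hq1 : (1 : ℚ) < (q : ℚ) := by exact_mod_cast hq
  refine Finset.prod_pos fun i hi => ?_
  have hiB : i < B := Finset.mem_range.mp hi
  have : (q:ℚ)^i < (q:ℚ)^B := pow_lt_pow_right₀ hq1 hiB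
  linarith

lemma qBinD_cast (q K T C : ℕ) (h : T + C ≤ K) :
    qBinD q (K:ℤ) (T:ℤ) (C:ℤ) =
      (∏ i ∈ Finset.range C, ((q:ℚ)^K - (q:ℚ)^(T+i))) /
      (∏ i ∈ Finset.range C, ((q:ℚ)^C - (q:ℚ)^i)) := by
  have hTK : T ≤ K := by omega
  have hsub : (K:ℤ) - (T:ℤ) = ((K - T : ℕ) : ℤ) := by omega
  rw [qBinD, if_pos ⟨Int.natCast_nonneg C, by omega⟩, hsub,
    qBin_cast q (K - T) C (by omega)]
  rw [show ((T:ℤ) * (C:ℤ)) = ((T * C : ℕ) : ℤ) by push_cast; ring, zpow_natCast,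
    mul_div_assoc']
  congr 1
  rw [pow_mul]
  have hc : ((q:ℚ)^T)^C = ∏ _i ∈ Finset.range C, (q:ℚ)^T := by
    rw [Finset.prod_const, Finset.card_range]
  rw [hc, ← Finset.prod_mul_distrib]
  refine Finset.prod_congr rfl fun i _ => ?_
  rw [mul_sub, ← pow_add, ← pow_add]
  congr 2 <;> omega

lemma scalar_step {q : ℕ} (hq : 2 ≤ q) (K C S : ℕ) (hK : S + 1 + C ≤ K) :
    ((q:ℚ)^K - (q:ℚ)^S) * ((q:ℚ)^S - 1) ≤ ((q:ℚ)^K - (q:ℚ)^(S+C)) * ((q:ℚ)^(S+1) - 1) := by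
  have hq2 : (2:ℚ) ≤ (q:ℚ) := by exact_mod_cast hq
  have hx : (1:ℚ) ≤ (q:ℚ)^S := one_le_pow₀ (by linarith)
  have hb : (0:ℚ) < (q:ℚ)^(S+C) := by positivity
  have hxb : (q:ℚ)^S ≤ (q:ℚ)^(S+C) := pow_le_pow_right₀ (by linarith) (by omega)
  have hqb : (q:ℚ) * (q:ℚ)^(S+C) ≤ (q:ℚ)^K := by
    calc (q:ℚ) * (q:ℚ)^(S+C) = (q:ℚ)^(S+C+1) := by ring
    _ ≤ (q:ℚ)^K := pow_le_pow_right₀ (by linarith) (by omega)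
  have hs1 : (q:ℚ)^(S+1) = (q:ℚ) * (q:ℚ)^S := by ring
  rw [hs1]
  nlinarith [mul_le_mul_of_nonneg_right hqb (by linarith : (0:ℚ) ≤ (q:ℚ)^S),
    mul_nonneg (mul_nonneg (by linarith : (0:ℚ) ≤ (q:ℚ) - 2) (by positivity : (0:ℚ) ≤ (q:ℚ)^K)) (by linarith : (0:ℚ) ≤ (q:ℚ)^S),
    mul_nonneg (by linarith : (0:ℚ) ≤ (q:ℚ)^S) (by linarith : (0:ℚ) ≤ (q:ℚ)^S - 1)]

lemma prod_step {q : ℕ} (hq : 2 ≤ q) (K C Y S : ℕ) (hY : 1 ≤ Y) (hYS : Y ≤ S)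
    (hK : S + 1 + C ≤ K) :
    (∏ i ∈ Finset.range C, ((q:ℚ)^K - (q:ℚ)^(S+i))) *
      (∏ i ∈ Finset.range Y, ((q:ℚ)^S - (q:ℚ)^i)) ≤
    (∏ i ∈ Finset.range C, ((q:ℚ)^K - (q:ℚ)^(S+1+i))) *
      (∏ i ∈ Finset.range Y, ((q:ℚ)^(S+1) - (q:ℚ)^i)) := by
  have hq2 : (2:ℚ) ≤ (q:ℚ) := by exact_mod_cast hq
  obtain ⟨Z, rfl⟩ : ∃ Z, Y = Z + 1 := ⟨Y - 1, by omega⟩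
  set A := ∏ i ∈ Finset.range C, ((q:ℚ)^K - (q:ℚ)^(S+i)) with hA
  set B := ∏ i ∈ Finset.range C, ((q:ℚ)^K - (q:ℚ)^(S+1+i)) with hB
  have hfac : ∀ m : ℕ, m ≤ K → (0:ℚ) ≤ (q:ℚ)^K - (q:ℚ)^m := by
    intro m hm
    have : (q:ℚ)^m ≤ (q:ℚ)^K := pow_le_pow_right₀ (by linarith) hm
    linarith
  have hApos : 0 ≤ A := Finset.prod_nonneg fun i hi =>
    hfac _ (by have := Finset.mem_range.mp hi; omega)
  have hBpos : 0 ≤ B := Finset.prod_nonneg fun i hi =>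
    hfac _ (by have := Finset.mem_range.mp hi; omega)
  -- telescoping identity
  have htel : A * ((q:ℚ)^K - (q:ℚ)^(S+C)) = B * ((q:ℚ)^K - (q:ℚ)^S) := by
    have h1 : A * ((q:ℚ)^K - (q:ℚ)^(S+C)) =
        ∏ i ∈ Finset.range (C+1), ((q:ℚ)^K - (q:ℚ)^(S+i)) := by
      rw [Finset.prod_range_succ]
    have h2 : ∏ i ∈ Finset.range (C+1), ((q:ℚ)^K - (q:ℚ)^(S+i)) =
        B * ((q:ℚ)^K - (q:ℚ)^S) := by
      rw [Finset.prod_range_succ']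
      simp only [Nat.add_zero]
      congr 1
      exact Finset.prod_congr rfl fun i _ => by rw [show S+(i+1) = S+1+i by omega]
    rw [h1, h2]
  -- split Y-products
  have hA2 : ∏ i ∈ Finset.range (Z+1), ((q:ℚ)^S - (q:ℚ)^i) =
      (∏ i ∈ Finset.range Z, ((q:ℚ)^S - (q:ℚ)^(i+1))) * ((q:ℚ)^S - 1) := by
    rw [Finset.prod_range_succ', pow_zero]
  have hB2 : ∏ i ∈ Finset.range (Z+1), ((q:ℚ)^(S+1) - (q:ℚ)^i) =
      (∏ i ∈ Finset.range Z, ((q:ℚ)^(S+1) - (q:ℚ)^(i+1))) * ((q:ℚ)^(S+1) - 1) := by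
    rw [Finset.prod_range_succ', pow_zero]
  have hsfac : ∀ i : ℕ, i < Z → (0:ℚ) ≤ (q:ℚ)^S - (q:ℚ)^(i+1) := by
    intro i hi
    have : (q:ℚ)^(i+1) ≤ (q:ℚ)^S := pow_le_pow_right₀ (by linarith) (by omega)
    linarith
  have hprodZ : (∏ i ∈ Finset.range Z, ((q:ℚ)^S - (q:ℚ)^(i+1))) ≤
      ∏ i ∈ Finset.range Z, ((q:ℚ)^(S+1) - (q:ℚ)^(i+1)) := by
    refine Finset.prod_le_prod (fun i hi => hsfac i (Finset.mem_range.mp hi)) ?_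
    intro i _
    have : (q:ℚ)^S ≤ (q:ℚ)^(S+1) := pow_le_pow_right₀ (by linarith) (by omega)
    linarith
  have hZnn : (0:ℚ) ≤ ∏ i ∈ Finset.range Z, ((q:ℚ)^S - (q:ℚ)^(i+1)) :=
    Finset.prod_nonneg fun i hi => hsfac i (Finset.mem_range.mp hi)
  have hscalar := scalar_step hq K C S hK
  have hscnn : (0:ℚ) ≤ ((q:ℚ)^K - (q:ℚ)^(S+C)) * ((q:ℚ)^(S+1) - 1) := by
    have h1 := hfac (S+C) (by omega)
    have h2 : (1:ℚ) ≤ (q:ℚ)^(S+1) := one_le_pow₀ (by linarith)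
    nlinarith
  -- inner inequality
  have hinner : ((q:ℚ)^K - (q:ℚ)^S) * (∏ i ∈ Finset.range (Z+1), ((q:ℚ)^S - (q:ℚ)^i)) ≤
      ((q:ℚ)^K - (q:ℚ)^(S+C)) * (∏ i ∈ Finset.range (Z+1), ((q:ℚ)^(S+1) - (q:ℚ)^i)) := by
    rw [hA2, hB2]
    calc ((q:ℚ)^K - (q:ℚ)^S) * ((∏ i ∈ Finset.range Z, ((q:ℚ)^S - (q:ℚ)^(i+1))) * ((q:ℚ)^S - 1))
        = (((q:ℚ)^K - (q:ℚ)^S) * ((q:ℚ)^S - 1)) *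
            (∏ i ∈ Finset.range Z, ((q:ℚ)^S - (q:ℚ)^(i+1))) := by ring
      _ ≤ (((q:ℚ)^K - (q:ℚ)^(S+C)) * ((q:ℚ)^(S+1) - 1)) *
            (∏ i ∈ Finset.range Z, ((q:ℚ)^(S+1) - (q:ℚ)^(i+1))) :=
          mul_le_mul hscalar hprodZ hZnn hscnn
      _ = ((q:ℚ)^K - (q:ℚ)^(S+C)) *
            ((∏ i ∈ Finset.range Z, ((q:ℚ)^(S+1) - (q:ℚ)^(i+1))) * ((q:ℚ)^(S+1) - 1)) := by
          ring
  -- combine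
  have hSCpos : (0:ℚ) < (q:ℚ)^K - (q:ℚ)^(S+C) := by
    have : (q:ℚ)^(S+C) < (q:ℚ)^K := pow_lt_pow_right₀ (by linarith) (by omega)
    linarith
  rw [← mul_le_mul_iff_of_pos_right hSCpos]
  calc A * (∏ i ∈ Finset.range (Z+1), ((q:ℚ)^S - (q:ℚ)^i)) * ((q:ℚ)^K - (q:ℚ)^(S+C))
      = (A * ((q:ℚ)^K - (q:ℚ)^(S+C))) * (∏ i ∈ Finset.range (Z+1), ((q:ℚ)^S - (q:ℚ)^i)) := by
        ring
    _ = B * (((q:ℚ)^K - (q:ℚ)^S) * (∏ i ∈ Finset.range (Z+1), ((q:ℚ)^S - (q:ℚ)^i))) := by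
        rw [htel]; ring
    _ ≤ B * (((q:ℚ)^K - (q:ℚ)^(S+C)) * (∏ i ∈ Finset.range (Z+1), ((q:ℚ)^(S+1) - (q:ℚ)^i))) :=
        mul_le_mul_of_nonneg_left hinner hBpos
    _ = B * (∏ i ∈ Finset.range (Z+1), ((q:ℚ)^(S+1) - (q:ℚ)^i)) * ((q:ℚ)^K - (q:ℚ)^(S+C)) := by
        ring

lemma key_mono {q : ℕ} (hq : 2 ≤ q) (K C Y T0 T : ℕ) (hY : 1 ≤ Y) (hYT0 : Y ≤ T0)
    (hT : T0 ≤ T) (hK : T + C ≤ K) :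
    (∏ i ∈ Finset.range C, ((q:ℚ)^K - (q:ℚ)^(T0+i))) *
      (∏ i ∈ Finset.range Y, ((q:ℚ)^T0 - (q:ℚ)^i)) ≤
    (∏ i ∈ Finset.range C, ((q:ℚ)^K - (q:ℚ)^(T+i))) *
      (∏ i ∈ Finset.range Y, ((q:ℚ)^T - (q:ℚ)^i)) := by
  induction T, hT using Nat.le_induction with
  | base => exact le_refl _
  | succ S hS ih =>
    exact le_trans (ih (by omega)) (prod_step hq K C Y S hY (by omega) (by omega))


theorem stmt6 (q : ℕ) (hq : IsPrimePow q) (c k t t0 y : ℤ)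
    (hy : y ≠ 0) (hc : c ≤ k - t) (ht : t0 ≤ t) :
    qBinD q k t0 c * qBin q t0 y ≤ qBinD q k t c * qBin q t y := by
  have hq2 : 2 ≤ q := hq.two_le
  by_cases hc0 : 0 ≤ c
  · by_cases hy0 : 0 ≤ y ∧ y ≤ t0
    · obtain ⟨hy0, hyt0⟩ := hy0
      lift c to ℕ using hc0 with C
      lift y to ℕ using hy0 with Y
      lift t0 to ℕ using (by omega) with T0
      lift t to ℕ using (by omega) with T
      lift k to ℕ using (by omega) with K
      have hYT0 : Y ≤ T0 := by omega
      have hY1 : 1 ≤ Y := by omega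
      have hT0T : T0 ≤ T := by omega
      have hTCK : T + C ≤ K := by omega
      rw [qBinD_cast q K T0 C (by omega), qBinD_cast q K T C hTCK,
        qBin_cast q T0 Y hYT0, qBin_cast q T Y (by omega),
        div_mul_div_comm, div_mul_div_comm]
      have hD : 0 < (∏ i ∈ Finset.range C, ((q:ℚ)^C - (q:ℚ)^i)) *
          ∏ i ∈ Finset.range Y, ((q:ℚ)^Y - (q:ℚ)^i) :=
        mul_pos (prod_den_pos hq2 C) (prod_den_pos hq2 Y)
      exact (div_le_div_iff_of_pos_right hD).mpr (key_mono hq2 K C Y T0 T hY1 hYT0 hT0T hTCK)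
    · have h1 : qBin q t0 y = 0 := by rw [qBin, if_neg hy0]
      rw [h1, mul_zero]
      exact mul_nonneg (qBinD_nonneg hq2 _ _ _) (qBin_nonneg hq2 _ _)
  · have h1 : qBinD q k t0 c = 0 := by rw [qBinD, if_neg (fun h => hc0 h.1)]
    have h2 : qBinD q k t c = 0 := by rw [qBinD, if_neg (fun h => hc0 h.1)]
    rw [h1, h2, zero_mul, zero_mul]
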